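/- arXiv:1610.07494 — 4 statements merged into one kernel-verified Lean document; each statement's English description precedes it below -/
import Mathlib

section
/- In the peculiar algebra 𝒜∂ (the path algebra of the quiver on four vertices with arrows p_i and q_i in opposite directions between consecutive vertices, modulo the relations p_i q_i = 0 = q_i p_i), the element p⁴ + q⁴ is central, where p = p₁+p₂+p₃+p₄ and q = q₁+q₂+q₃+q₄. -/
/-!
**Statement 0.** In the peculiar algebra `𝒜∂` (the path algebra over 𝔽₂ of the quiver
on four vertices with arrows `p_i : i → i − 1` and `q_i : i − 1 → i` (indices mod 4),
modulo the relations `p_i q_i = 0 = q_i p_i`), the element `p⁴ + q⁴` is central, where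
`p = p₁ + p₂ + p₃ + p₄` and `q = q₁ + q₂ + q₃ + q₄`.

The path algebra is presented as the quotient of the free 𝔽₂-algebra on generators
`ι_i, p_i, q_i` by the relations making the `ι_i` a complete system of orthogonal
idempotents with `p_i = ι_i p_i ι_{i−1}` and `q_i = ι_{i−1} q_i ι_i`, together with
`p_i q_i = 0 = q_i p_i`.
-/

namespace PeculiarAlgebra

/-- generators of the peculiar algebra `𝒜∂` -/
inductive Gen : Type
  | iota : ZMod 4 → Gen   -- the idempotents ι_i
  | p : ZMod 4 → Gen      -- p_i : path from vertex i to vertex i − 1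
  | q : ZMod 4 → Gen      -- q_i : path from vertex i − 1 to vertex i

noncomputable def g (x : Gen) : FreeAlgebra (ZMod 2) Gen := FreeAlgebra.ι (ZMod 2) x

/-- the defining relations of `𝒜∂` (multiplication is concatenation of paths,
`a * b` = "a followed by b") -/
inductive Rel : FreeAlgebra (ZMod 2) Gen → FreeAlgebra (ZMod 2) Gen → Prop
  | iota_mul (i j : ZMod 4) :
      Rel (g (.iota i) * g (.iota j)) (if i = j then g (.iota i) else 0)
  | iota_sum : Rel (∑ i : ZMod 4, g (.iota i)) 1
  | iota_p (i j : ZMod 4) :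
      Rel (g (.iota i) * g (.p j)) (if i = j then g (.p j) else 0)
  | p_iota (i j : ZMod 4) :
      Rel (g (.p j) * g (.iota i)) (if i = j - 1 then g (.p j) else 0)
  | iota_q (i j : ZMod 4) :
      Rel (g (.iota i) * g (.q j)) (if i = j - 1 then g (.q j) else 0)
  | q_iota (i j : ZMod 4) :
      Rel (g (.q j) * g (.iota i)) (if i = j then g (.q j) else 0)
  | pq (i : ZMod 4) : Rel (g (.p i) * g (.q i)) 0
  | qp (i : ZMod 4) : Rel (g (.q i) * g (.p i)) 0

/-- the peculiar algebra `𝒜∂` -/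
abbrev A := RingQuot Rel

noncomputable def ιA (i : ZMod 4) : A := RingQuot.mkRingHom Rel (g (.iota i))
noncomputable def pA (i : ZMod 4) : A := RingQuot.mkRingHom Rel (g (.p i))
noncomputable def qA (i : ZMod 4) : A := RingQuot.mkRingHom Rel (g (.q i))

/-- `p = p₁ + p₂ + p₃ + p₄` -/
noncomputable def P : A := ∑ i : ZMod 4, pA i
/-- `q = q₁ + q₂ + q₃ + q₄` -/
noncomputable def Q : A := ∑ i : ZMod 4, qA i

-- basic relations in A
lemma iota_mul (i j : ZMod 4) : ιA i * ιA j = if i = j then ιA i else 0 := by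
  have h := RingQuot.mkRingHom_rel (Rel.iota_mul i j)
  rw [map_mul] at h
  split_ifs at h ⊢ <;> simpa [ιA] using h

lemma iota_p (i j : ZMod 4) : ιA i * pA j = if i = j then pA j else 0 := by
  have h := RingQuot.mkRingHom_rel (Rel.iota_p i j)
  rw [map_mul] at h
  split_ifs at h ⊢ <;> simpa [ιA, pA] using h

lemma p_iota (i j : ZMod 4) : pA j * ιA i = if i = j - 1 then pA j else 0 := by
  have h := RingQuot.mkRingHom_rel (Rel.p_iota i j)
  rw [map_mul] at h
  split_ifs at h ⊢ <;> simpa [ιA, pA] using h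

lemma iota_q (i j : ZMod 4) : ιA i * qA j = if i = j - 1 then qA j else 0 := by
  have h := RingQuot.mkRingHom_rel (Rel.iota_q i j)
  rw [map_mul] at h
  split_ifs at h ⊢ <;> simpa [ιA, qA] using h

lemma q_iota (i j : ZMod 4) : qA j * ιA i = if i = j then qA j else 0 := by
  have h := RingQuot.mkRingHom_rel (Rel.q_iota i j)
  rw [map_mul] at h
  split_ifs at h ⊢ <;> simpa [ιA, qA] using h

lemma pq (i : ZMod 4) : pA i * qA i = 0 := by
  have h := RingQuot.mkRingHom_rel (Rel.pq i)
  rw [map_mul] at h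
  simpa [pA, qA] using h

lemma qp (i : ZMod 4) : qA i * pA i = 0 := by
  have h := RingQuot.mkRingHom_rel (Rel.qp i)
  rw [map_mul] at h
  simpa [pA, qA] using h

lemma p_self_iota (i : ZMod 4) : pA i * ιA (i - 1) = pA i := by rw [p_iota, if_pos rfl]
lemma iota_p_self (i : ZMod 4) : ιA i * pA i = pA i := by rw [iota_p, if_pos rfl]
lemma q_self_iota (i : ZMod 4) : qA i * ιA i = qA i := by rw [q_iota, if_pos rfl]
lemma iota_q_self (i : ZMod 4) : ιA (i - 1) * qA i = qA i := by rw [iota_q, if_pos rfl]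

/-- `p_i p_j = 0` unless `j = i - 1`. -/
lemma pp_zero {i j : ZMod 4} (h : j ≠ i - 1) : pA i * pA j = 0 := by
  rw [← p_self_iota i, ← iota_p_self j, mul_assoc, ← mul_assoc (ιA (i-1)),
    iota_mul, if_neg (fun hh => h hh.symm)]
  simp

/-- `q_i q_j = 0` unless `j = i + 1`. -/
lemma qq_zero {i j : ZMod 4} (h : j ≠ i + 1) : qA i * qA j = 0 := by
  rw [← q_self_iota i, ← iota_q_self j, mul_assoc, ← mul_assoc (ιA i),
    iota_mul, if_neg (fun hh => h (by rw [hh]; ring))]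
  simp

/-- `p_i q_j = 0` always. -/
lemma pq_zero (i j : ZMod 4) : pA i * qA j = 0 := by
  by_cases h : i = j
  · subst h; exact pq i
  · rw [← p_self_iota i, ← iota_q_self j, mul_assoc, ← mul_assoc (ιA (i-1)),
      iota_mul, if_neg (fun hh => h (by rwa [sub_left_inj] at hh))]
    simp

/-- `q_i p_j = 0` always. -/
lemma qp_zero (i j : ZMod 4) : qA i * pA j = 0 := by
  by_cases h : i = j
  · subst h; exact qp i
  · rw [← q_self_iota i, ← iota_p_self j, mul_assoc, ← mul_assoc (ιA i),
      iota_mul, if_neg h]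
    simp

lemma pP (j : ZMod 4) : pA j * P = pA j * pA (j - 1) := by
  rw [P, Finset.mul_sum]
  exact Finset.sum_eq_single _ (fun i _ hi => pp_zero hi) (by simp)

lemma Pp (j : ZMod 4) : P * pA j = pA (j + 1) * pA j := by
  rw [P, Finset.sum_mul]
  refine Finset.sum_eq_single _ (fun i _ hi => pp_zero ?_) (by simp)
  intro hh; exact hi (by rw [hh]; ring)

lemma qQ (j : ZMod 4) : qA j * Q = qA j * qA (j + 1) := by
  rw [Q, Finset.mul_sum]
  exact Finset.sum_eq_single _ (fun i _ hi => qq_zero hi) (by simp)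

lemma Qq (j : ZMod 4) : Q * qA j = qA (j - 1) * qA j := by
  rw [Q, Finset.sum_mul]
  refine Finset.sum_eq_single _ (fun i _ hi => qq_zero ?_) (by simp)
  intro hh; exact hi (by rw [hh]; ring)

lemma iP (i : ZMod 4) : ιA i * P = pA i := by
  rw [P, Finset.mul_sum]
  refine Finset.sum_eq_single _ (fun j _ hj => ?_) (by simp) |>.trans (iota_p_self i)
  rw [iota_p, if_neg (fun hh => hj hh.symm)]

lemma Pi' (i : ZMod 4) : P * ιA i = pA (i + 1) := by
  rw [P, Finset.sum_mul]
  refine (Finset.sum_eq_single (i + 1) (fun j _ hj => ?_) (by simp)).trans ?_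
  · rw [p_iota, if_neg (fun hh => hj (by rw [hh]; ring))]
  · rw [p_iota, if_pos (by ring)]

lemma iQ (i : ZMod 4) : ιA i * Q = qA (i + 1) := by
  rw [Q, Finset.mul_sum]
  refine (Finset.sum_eq_single (i + 1) (fun j _ hj => ?_) (by simp)).trans ?_
  · rw [iota_q, if_neg (fun hh => hj (by rw [hh]; ring))]
  · rw [iota_q, if_pos (by ring)]

lemma Qi (i : ZMod 4) : Q * ιA i = qA i := by
  rw [Q, Finset.sum_mul]
  refine Finset.sum_eq_single _ (fun j _ hj => ?_) (by simp) |>.trans (q_self_iota i)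
  rw [q_iota, if_neg (fun hh => hj hh.symm)]

lemma pQ (j : ZMod 4) : pA j * Q = 0 := by
  rw [Q, Finset.mul_sum]; simp [pq_zero]

lemma Qp (j : ZMod 4) : Q * pA j = 0 := by
  rw [Q, Finset.sum_mul]; simp [qp_zero]

lemma qP (j : ZMod 4) : qA j * P = 0 := by
  rw [P, Finset.mul_sum]; simp [qp_zero]

lemma Pq (j : ZMod 4) : P * qA j = 0 := by
  rw [P, Finset.sum_mul]; simp [pq_zero]

lemma wP (x : A) (j : ZMod 4) : (x * pA j) * P = (x * pA j) * pA (j - 1) := by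
  rw [mul_assoc, pP, mul_assoc]

lemma Pw (x : A) (k : ZMod 4) : P * (pA k * x) = pA (k + 1) * (pA k * x) := by
  rw [← mul_assoc, Pp, mul_assoc]

lemma wQ (x : A) (j : ZMod 4) : (x * qA j) * Q = (x * qA j) * qA (j + 1) := by
  rw [mul_assoc, qQ, mul_assoc]

lemma Qw (x : A) (k : ZMod 4) : Q * (qA k * x) = qA (k - 1) * (qA k * x) := by
  rw [← mul_assoc, Qq, mul_assoc]

lemma z1 : ∀ j : ZMod 4, j + 1 + 1 + 1 + 1 = j := by decide
lemma z2 : ∀ j : ZMod 4, j + 1 + 1 + 1 = j - 1 := by decide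
lemma z3 : ∀ j : ZMod 4, j + 1 + 1 = j - 1 - 1 := by decide
lemma z4 : ∀ j : ZMod 4, j + 1 = j - 1 - 1 - 1 := by decide
lemma z5 : ∀ j : ZMod 4, j - 1 - 1 - 1 - 1 = j := by decide

lemma P4L : (P : A) ^ 4 = ((P * P) * P) * P := by
  rw [pow_succ, pow_succ, pow_succ, pow_one]

lemma P4R : (P : A) ^ 4 = P * (P * (P * P)) := by
  rw [pow_succ', pow_succ', pow_succ', pow_one]

lemma Q4L : (Q : A) ^ 4 = ((Q * Q) * Q) * Q := by
  rw [pow_succ, pow_succ, pow_succ, pow_one]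

lemma Q4R : (Q : A) ^ 4 = Q * (Q * (Q * Q)) := by
  rw [pow_succ', pow_succ', pow_succ', pow_one]

lemma iota_P4 (i : ZMod 4) : ιA i * P ^ 4 = P ^ 4 * ιA i := by
  have L : ιA i * P ^ 4 = ((pA i * pA (i-1)) * pA (i-1-1)) * pA (i-1-1-1) := by
    rw [P4L, ← mul_assoc, ← mul_assoc, ← mul_assoc, iP, pP, wP, wP]
  have R : P ^ 4 * ιA i = pA (i+1+1+1+1) * (pA (i+1+1+1) * (pA (i+1+1) * pA (i+1))) := by
    rw [P4R, mul_assoc, mul_assoc, mul_assoc, Pi', Pp, Pw, Pw]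
  rw [L, R, z1, z2, z3, z4]
  simp only [mul_assoc]

lemma iota_Q4 (i : ZMod 4) : ιA i * Q ^ 4 = Q ^ 4 * ιA i := by
  have L : ιA i * Q ^ 4 = ((qA (i+1) * qA (i+1+1)) * qA (i+1+1+1)) * qA (i+1+1+1+1) := by
    rw [Q4L, ← mul_assoc, ← mul_assoc, ← mul_assoc, iQ, qQ, wQ, wQ]
  have R : Q ^ 4 * ιA i = qA (i-1-1-1) * (qA (i-1-1) * (qA (i-1) * qA i)) := by
    rw [Q4R, mul_assoc, mul_assoc, mul_assoc, Qi, Qq, Qw, Qw]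
  rw [L, R, z1, z2, z3, z4]
  simp only [mul_assoc]

lemma p_P4 (j : ZMod 4) : pA j * P ^ 4 = P ^ 4 * pA j := by
  have L : pA j * P ^ 4 =
      (((pA j * pA (j-1)) * pA (j-1-1)) * pA (j-1-1-1)) * pA (j-1-1-1-1) := by
    rw [P4L, ← mul_assoc, ← mul_assoc, ← mul_assoc, pP, wP, wP, wP]
  have R : P ^ 4 * pA j =
      pA (j+1+1+1+1) * (pA (j+1+1+1) * (pA (j+1+1) * (pA (j+1) * pA j))) := by
    rw [P4R, mul_assoc, mul_assoc, mul_assoc, Pp, Pw, Pw, Pw]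
  rw [L, R, z1, z2, z3, z4, z5]
  simp only [mul_assoc]

lemma q_Q4 (j : ZMod 4) : qA j * Q ^ 4 = Q ^ 4 * qA j := by
  have L : qA j * Q ^ 4 =
      (((qA j * qA (j+1)) * qA (j+1+1)) * qA (j+1+1+1)) * qA (j+1+1+1+1) := by
    rw [Q4L, ← mul_assoc, ← mul_assoc, ← mul_assoc, qQ, wQ, wQ, wQ]
  have R : Q ^ 4 * qA j =
      qA (j-1-1-1-1) * (qA (j-1-1-1) * (qA (j-1-1) * (qA (j-1) * qA j))) := by
    rw [Q4R, mul_assoc, mul_assoc, mul_assoc, Qq, Qw, Qw, Qw]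
  rw [L, R, z1, z2, z3, z4, z5]
  simp only [mul_assoc]

lemma p_Q4 (j : ZMod 4) : pA j * Q ^ 4 = Q ^ 4 * pA j := by
  have l : pA j * Q ^ 4 = 0 := by rw [Q4R, ← mul_assoc, pQ, zero_mul]
  have r : Q ^ 4 * pA j = 0 := by rw [Q4L, mul_assoc, Qp, mul_zero]
  rw [l, r]

lemma q_P4 (j : ZMod 4) : qA j * P ^ 4 = P ^ 4 * qA j := by
  have l : qA j * P ^ 4 = 0 := by rw [P4R, ← mul_assoc, qP, zero_mul]
  have r : P ^ 4 * qA j = 0 := by rw [P4L, mul_assoc, Pq, mul_zero]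
  rw [l, r]

lemma gen_comm (x : Gen) :
    RingQuot.mkRingHom Rel (g x) * (P ^ 4 + Q ^ 4)
      = (P ^ 4 + Q ^ 4) * RingQuot.mkRingHom Rel (g x) := by
  cases x with
  | iota i => show ιA i * _ = _ * ιA i; rw [mul_add, add_mul, iota_P4, iota_Q4]
  | p i => show pA i * _ = _ * pA i; rw [mul_add, add_mul, p_P4, p_Q4]
  | q i => show qA i * _ = _ * qA i; rw [mul_add, add_mul, q_P4, q_Q4]

end PeculiarAlgebra

open PeculiarAlgebra in
/-- `p⁴ + q⁴` is central in the peculiar algebra `𝒜∂`. -/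
theorem stmt0 : (P ^ 4 + Q ^ 4) ∈ Set.center A := by
  rw [Semigroup.mem_center_iff]
  intro b
  obtain ⟨x, rfl⟩ := RingQuot.mkRingHom_surjective Rel b
  induction x using FreeAlgebra.induction with
  | grade0 r =>
    have h : RingQuot.mkRingHom Rel (algebraMap (ZMod 2) (FreeAlgebra (ZMod 2) Gen) r)
        = algebraMap (ZMod 2) A r := by
      rw [← RingQuot.mkAlgHom_coe (ZMod 2)]
      exact (RingQuot.mkAlgHom (ZMod 2) Rel).commutes r
    rw [h]
    exact Algebra.commutes r _
  | grade1 x => exact gen_comm x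
  | mul a b ha hb => rw [map_mul, mul_assoc, hb, ← mul_assoc, ha, mul_assoc]
  | add a b ha hb => rw [map_add, add_mul, ha, hb, mul_add]
end

section
/- Let M be a finitely generated curved type D structure over the peculiar algebra 𝒜∂ with curvature p⁴ + q⁴, equipped with a homological ℤ-grading such that the structure map δ: M → 𝒜∂ ⊗ M decreases the homological grading by 1 (where the grading of a ⊗ m is h(a) + h(m)). Then M splits as a direct sum M₀ ⊕ M₁ such that the component of δ mapping M₀ into 𝒜∂ ⊗ M₀ and the component mapping M₁ into 𝒜∂ ⊗ M₁ both vanish. -/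
/-!
**Statement 2.** Let `M` be a finitely generated curved type D structure over the
peculiar algebra `𝒜∂` with curvature `p⁴ + q⁴`, equipped with a homological
ℤ-grading such that the structure map `δ : M → 𝒜∂ ⊗ M` decreases the homological
grading by 1 (where the grading of `a ⊗ m` is `h(a) + h(m)`).  Then `M` splits as a
direct sum `M₀ ⊕ M₁` such that the component of `δ` mapping `M₀` into `𝒜∂ ⊗ M₀` and
the component mapping `M₁` into `𝒜∂ ⊗ M₁` both vanish.

The peculiar algebra is the path algebra of the paper, presented by generators and
relations.  Its homological grading is encoded as an internal ℤ-grading `𝒜` with the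
idempotents in degree 0 and `p_i, q_i` in degree `0` or `−1` according to a fixed
orientation `ε` of the four punctures (two "out", two "in").  The type D structure
`M` carries a joint decomposition `P'` by homological degree and by idempotent, and
`δ` is ℐ-linear and decreases the homological degree by exactly 1.
-/

namespace PeculiarAlgebra

/-- the curvature `a_c = p⁴ + q⁴` -/
noncomputable def acurv : A := P ^ 4 + Q ^ 4

/-- the subspace `ι_i · 𝒜∂ · ι_j` -/
noncomputable def idemPart (i j : ZMod 4) : Submodule (ZMod 2) A where
  carrier := {x | ιA i * x * ιA j = x}
  add_mem' := by
    intro x y hx hy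
    simp only [Set.mem_setOf_eq] at *
    rw [mul_add, add_mul, hx, hy]
  zero_mem' := by simp
  smul_mem' := by
    intro c x hx
    simp only [Set.mem_setOf_eq] at *
    rw [Algebra.mul_smul_comm, Algebra.smul_mul_assoc, hx]

open TensorProduct in
/-- the subspace of `𝒜∂ ⊗ M` spanned by `U ⊗ W` -/
noncomputable def tensorSpan (U : Submodule (ZMod 2) A) {M : Type*} [AddCommGroup M]
    [Module (ZMod 2) M] (W : Submodule (ZMod 2) M) :
    Submodule (ZMod 2) (TensorProduct (ZMod 2) A M) :=
  Submodule.span (ZMod 2) {z | ∃ u ∈ U, ∃ w ∈ W, z = u ⊗ₜ[ZMod 2] w}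

end PeculiarAlgebra

namespace PeculiarAux
open PeculiarAlgebra

lemma riota_mul (i j : ZMod 4) : ιA i * ιA j = if i = j then ιA i else 0 := by
  have h := RingQuot.mkRingHom_rel (Rel.iota_mul i j)
  rw [map_mul] at h
  by_cases hij : i = j
  · subst hij; rw [if_pos rfl] at h ⊢; exact h
  · rw [if_neg hij] at h ⊢; rw [map_zero] at h; exact h

lemma sum_iotaA : (∑ i : ZMod 4, ιA i) = 1 := by
  have h := RingQuot.mkRingHom_rel Rel.iota_sum
  rw [map_sum, map_one] at h
  simpa only [ιA] using h

lemma riota_p (i j : ZMod 4) : ιA i * pA j = if i = j then pA j else 0 := by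
  have h := RingQuot.mkRingHom_rel (Rel.iota_p i j)
  rw [map_mul] at h
  by_cases hij : i = j
  · subst hij; rw [if_pos rfl] at h ⊢; exact h
  · rw [if_neg hij] at h ⊢; rw [map_zero] at h; exact h

lemma rp_iota (i j : ZMod 4) : pA j * ιA i = if i = j - 1 then pA j else 0 := by
  have h := RingQuot.mkRingHom_rel (Rel.p_iota i j)
  rw [map_mul] at h
  by_cases hij : i = j - 1
  · subst hij; rw [if_pos rfl] at h ⊢; exact h
  · rw [if_neg hij] at h ⊢; rw [map_zero] at h; exact h

lemma riota_q (i j : ZMod 4) : ιA i * qA j = if i = j - 1 then qA j else 0 := by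
  have h := RingQuot.mkRingHom_rel (Rel.iota_q i j)
  rw [map_mul] at h
  by_cases hij : i = j - 1
  · subst hij; rw [if_pos rfl] at h ⊢; exact h
  · rw [if_neg hij] at h ⊢; rw [map_zero] at h; exact h

lemma rq_iota (i j : ZMod 4) : qA j * ιA i = if i = j then qA j else 0 := by
  have h := RingQuot.mkRingHom_rel (Rel.q_iota i j)
  rw [map_mul] at h
  by_cases hij : i = j
  · subst hij; rw [if_pos rfl] at h ⊢; exact h
  · rw [if_neg hij] at h ⊢; rw [map_zero] at h; exact h

/-- the set of images of generators -/
noncomputable def S : Set A := Set.range fun x : Gen => RingQuot.mkRingHom Rel (g x)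

lemma span_closure_S :
    Submodule.span (ZMod 2) (Submonoid.closure S : Set A) = ⊤ := by
  have h1 : Algebra.adjoin (ZMod 2) S = ⊤ := by
    have h2 : S = ⇑(RingQuot.mkAlgHom (ZMod 2) Rel) ''
        (Set.range (FreeAlgebra.ι (ZMod 2) : Gen → FreeAlgebra (ZMod 2) Gen)) := by
      rw [← Set.range_comp]
      ext x
      simp only [S, Set.mem_range, Function.comp_apply]
      constructor
      · rintro ⟨y, rfl⟩
        exact ⟨y, by rw [← RingQuot.mkAlgHom_coe (ZMod 2) Rel]; rfl⟩
      · rintro ⟨y, rfl⟩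
        exact ⟨y, by rw [← RingQuot.mkAlgHom_coe (ZMod 2) Rel]; rfl⟩
    rw [h2, ← AlgHom.map_adjoin, FreeAlgebra.adjoin_range_ι, Algebra.map_top]
    rw [AlgHom.range_eq_top]
    exact RingQuot.mkAlgHom_surjective (ZMod 2) Rel
  have h3 := Algebra.adjoin_eq_span (R := ZMod 2) (s := S)
  rw [h1] at h3
  rw [← h3]
  rfl

end PeculiarAux

namespace PeculiarAux
open PeculiarAlgebra

variable (𝒜 : ℤ → Submodule (ZMod 2) A) (F : ZMod 4 → ZMod 2)

/-- elements located at `(i,j)` whose degree has the right parity -/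
noncomputable def Npar (i j : ZMod 4) : Submodule (ZMod 2) A :=
  ⨆ k ∈ {k : ℤ | (k : ZMod 2) = F i + F j}, 𝒜 k

lemma mem_Npar {i j : ZMod 4} {k : ℤ} (hk : (k : ZMod 2) = F i + F j) {x : A}
    (hx : x ∈ 𝒜 k) : x ∈ Npar 𝒜 F i j :=
  (le_biSup _ hk : 𝒜 k ≤ Npar 𝒜 F i j) hx

lemma Npar_induction {i j : ZMod 4} {x : A} (hx : x ∈ Npar 𝒜 F i j) {C : A → Prop}
    (mem : ∀ k : ℤ, (k : ZMod 2) = F i + F j → ∀ x ∈ 𝒜 k, C x)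
    (zero : C 0) (add : ∀ x y, C x → C y → C (x + y)) : C x := by
  rw [Npar, ← iSup_subtype''] at hx
  exact Submodule.iSup_induction (motive := C) _ hx (fun k => mem k.1 k.2) zero add

lemma Npar_mul (h𝒜mul : ∀ i j : ℤ, ∀ x ∈ 𝒜 i, ∀ y ∈ 𝒜 j, x * y ∈ 𝒜 (i + j))
    {i m j : ZMod 4} {x y : A} (hx : x ∈ Npar 𝒜 F i m) (hy : y ∈ Npar 𝒜 F m j) :
    x * y ∈ Npar 𝒜 F i j := by
  refine Npar_induction 𝒜 F hy (C := fun y => x * y ∈ Npar 𝒜 F i j) ?_ ?_ ?_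
  · intro k₂ hk₂ y hy2
    refine Npar_induction 𝒜 F hx (C := fun x => x * y ∈ Npar 𝒜 F i j) ?_ ?_ ?_
    · intro k₁ hk₁ x hx1
      refine mem_Npar 𝒜 F ?_ (h𝒜mul _ _ _ hx1 _ hy2)
      push_cast
      rw [hk₁, hk₂]
      generalize F i = a; generalize F m = b; generalize F j = c
      revert a b c; decide
    · simp
    · intro a b ha hb
      rw [add_mul]
      exact add_mem ha hb
  · simp
  · intro a b ha hb
    rw [mul_add]
    exact add_mem ha hb

lemma idemPart_le_Npar
    (hι : ∀ i, ιA i ∈ 𝒜 0)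
    (hp : ∀ i, pA i ∈ 𝒜 (if (ε : ZMod 4 → Bool) i then 0 else -1))
    (hq : ∀ i, qA i ∈ 𝒜 (if ε i then 0 else -1))
    (h𝒜mul : ∀ i j : ℤ, ∀ x ∈ 𝒜 i, ∀ y ∈ 𝒜 j, x * y ∈ 𝒜 (i + j))
    (hF : ∀ m, F m + F (m - 1) = (if ε m then 0 else 1))
    (i j : ZMod 4) : idemPart i j ≤ Npar 𝒜 F i j := by
  have hFself : ∀ m : ZMod 4, ((0 : ℤ) : ZMod 2) = F m + F m := by
    intro m; generalize F m = a; revert a; decide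
  have hiotaN : ∀ i' j' : ZMod 4, ιA i' * ιA j' ∈ Npar 𝒜 F i' j' := by
    intro i' j'
    rw [riota_mul]
    by_cases hij : i' = j'
    · subst hij
      rw [if_pos rfl]
      exact mem_Npar 𝒜 F (hFself i') (hι i')
    · rw [if_neg hij]; exact zero_mem _
  have hword : ∀ w ∈ Submonoid.closure S, ∀ i' j' : ZMod 4,
      ιA i' * w * ιA j' ∈ Npar 𝒜 F i' j' := by
    intro w hw
    induction hw using Submonoid.closure_induction with
    | mem w hwS =>
      obtain ⟨x0, rfl⟩ := hwS
      intro i' j'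
      cases x0 with
      | iota m =>
        show ιA i' * ιA m * ιA j' ∈ _
        rw [riota_mul]
        by_cases him : i' = m
        · subst him; rw [if_pos rfl]; exact hiotaN i' j'
        · rw [if_neg him, zero_mul]; exact zero_mem _
      | p m =>
        show ιA i' * pA m * ιA j' ∈ _
        rw [riota_p]
        by_cases him : i' = m
        · subst him
          rw [if_pos rfl, rp_iota]
          by_cases hjm : j' = i' - 1
          · subst hjm
            rw [if_pos rfl]
            refine mem_Npar 𝒜 F ?_ (hp i')
            rw [hF i']
            cases hi : ε i' <;> decide
          · rw [if_neg hjm]; exact zero_mem _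
        · rw [if_neg him, zero_mul]; exact zero_mem _
      | q m =>
        show ιA i' * qA m * ιA j' ∈ _
        rw [riota_q]
        by_cases him : i' = m - 1
        · subst him
          rw [if_pos rfl, rq_iota]
          by_cases hjm : j' = m
          · subst hjm
            rw [if_pos rfl]
            refine mem_Npar 𝒜 F ?_ (hq j')
            rw [add_comm, hF j']
            cases hi : ε j' <;> decide
          · rw [if_neg hjm]; exact zero_mem _
        · rw [if_neg him, zero_mul]; exact zero_mem _
    | one =>
      intro i' j'
      rw [mul_one]
      exact hiotaN i' j'
    | mul u v hu hv ihu ihv =>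
      intro i' j'
      have h1 : (1 : A) = ∑ m : ZMod 4, ιA m * ιA m := by
        rw [← sum_iotaA]
        refine Finset.sum_congr rfl fun m _ => ?_
        rw [riota_mul, if_pos rfl]
      have key : ιA i' * (u * v) * ιA j' =
          ∑ m : ZMod 4, (ιA i' * u * ιA m) * (ιA m * v * ιA j') := by
        conv_lhs => rw [show u * v = u * 1 * v by rw [mul_one], h1]
        rw [Finset.mul_sum, Finset.sum_mul, Finset.mul_sum, Finset.sum_mul]
        refine Finset.sum_congr rfl fun m _ => ?_
        simp only [mul_assoc]
      rw [key]
      exact Submodule.sum_mem _ fun m _ =>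
        Npar_mul 𝒜 F h𝒜mul (ihu i' m) (ihv m j')
  intro x hx
  have hxe : ιA i * x * ιA j = x := hx
  set L : A →ₗ[ZMod 2] A :=
    (LinearMap.mulLeft (ZMod 2) (ιA i)).comp (LinearMap.mulRight (ZMod 2) (ιA j)) with hL
  have hxL : L x = x := by
    simp only [hL, LinearMap.comp_apply, LinearMap.mulLeft_apply, LinearMap.mulRight_apply,
      ← mul_assoc, hxe]
  have hmap : Submodule.map L ⊤ ≤ Npar 𝒜 F i j := by
    rw [← span_closure_S, Submodule.map_span, Submodule.span_le]
    rintro z ⟨w, hw, rfl⟩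
    simp only [hL, LinearMap.comp_apply, LinearMap.mulLeft_apply, LinearMap.mulRight_apply,
      ← mul_assoc]
    exact hword w hw i j
  exact hmap ⟨x, trivial, hxL⟩

end PeculiarAux

namespace PeculiarAux
open PeculiarAlgebra

lemma disjoint_biSup_biSup {ι M : Type*} [AddCommGroup M] [Module (ZMod 2) M]
    {p : ι → Submodule (ZMod 2) M} (h : iSupIndep p) {s t : Set ι}
    (hst : ∀ i, i ∈ s → i ∉ t) :
    Disjoint (⨆ i ∈ s, p i) (⨆ i ∈ t, p i) := by
  classical
  rw [Submodule.disjoint_def]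
  intro x hxs hxt
  rw [← iSup_subtype'' s p, Submodule.mem_iSup_iff_exists_finsupp] at hxs
  obtain ⟨f, hf, hsum⟩ := hxs
  have hzero : ∀ i₀ : s, f i₀ = 0 := by
    intro i₀
    by_cases hi₀ : i₀ ∈ f.support
    · have hx' : f i₀ = x - ∑ j ∈ f.support.erase i₀, f j := by
        rw [← hsum, Finsupp.sum, ← Finset.add_sum_erase _ _ hi₀]
        abel
      have hni : (↑i₀ : ι) ∉ t ∪ (s \ {(↑i₀ : ι)}) := by
        intro hmem
        rcases hmem with hmem | hmem
        · exact hst _ i₀.2 hmem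
        · exact hmem.2 rfl
      have hdisj := h.disjoint_biSup (y := t ∪ (s \ {(↑i₀ : ι)})) hni
      have hmem2 : f i₀ ∈ ⨆ j ∈ t ∪ (s \ {(↑i₀ : ι)}), p j := by
        rw [hx']
        refine sub_mem ?_ (Submodule.sum_mem _ fun j hj => ?_)
        · exact (biSup_mono (f := fun i => p i)
            (fun i (hi : i ∈ t) => Set.mem_union_left _ hi)) hxt
        · have hjne : (↑j : ι) ≠ ↑i₀ := fun hc => (Finset.ne_of_mem_erase hj) (Subtype.ext hc)
          exact (le_biSup (fun i => p i)
            (Set.mem_union_right _ (show (↑j : ι) ∈ s \ {(↑i₀ : ι)} from ⟨j.2, hjne⟩))) (hf j)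
      exact Submodule.disjoint_def.mp hdisj _ (hf i₀) hmem2
    · exact Finsupp.notMem_support_iff.mp hi₀
  rw [← hsum, Finsupp.sum]
  exact Finset.sum_eq_zero fun j _ => hzero j

lemma tensorSpan_le_top {U : Submodule (ZMod 2) A} {M : Type*} [AddCommGroup M]
    [Module (ZMod 2) M] {W W' : Submodule (ZMod 2) M} (h : W ≤ W') :
    tensorSpan U W ≤ tensorSpan ⊤ W' :=
  Submodule.span_mono (by
    rintro z ⟨u, hu, w, hw, rfl⟩
    exact ⟨u, trivial, w, h hw, rfl⟩)

lemma tensorSpan_bot {M : Type*} [AddCommGroup M] [Module (ZMod 2) M]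
    (W : Submodule (ZMod 2) M) :
    tensorSpan (⊥ : Submodule (ZMod 2) A) W = ⊥ := by
  refine le_antisymm (Submodule.span_le.mpr ?_) bot_le
  rintro z ⟨u, hu, w, hw, rfl⟩
  rw [Submodule.mem_bot] at hu
  simp [hu]

lemma exists_F' (e : ZMod 4 → ZMod 2) (hsum4 : e 0 + e 1 + e 2 + e 3 = 0) :
    ∃ F : ZMod 4 → ZMod 2, ∀ m, F m + F (m - 1) = e m := by
  refine ⟨fun i => if i = 1 then e 1 else if i = 2 then e 1 + e 2 else
    if i = 3 then e 1 + e 2 + e 3 else 0, ?_⟩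
  revert hsum4
  revert e
  decide

lemma exists_F (ε : ZMod 4 → Bool)
    (hε : (Finset.univ.filter fun i => ε i = true).card = 2) :
    ∃ F : ZMod 4 → ZMod 2, ∀ m, F m + F (m - 1) = (if ε m then 0 else 1) := by
  set e : ZMod 4 → ZMod 2 := fun m => if ε m then 0 else 1 with he
  have h4 : (Finset.univ.filter fun i : ZMod 4 => ¬(ε i = true)).card = 2 := by
    have hadd := Finset.card_filter_add_card_filter_not
      (s := (Finset.univ : Finset (ZMod 4))) (p := fun i => ε i = true)
    have hcard : (Finset.univ : Finset (ZMod 4)).card = 4 := by decide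
    omega
  have hsum : ∑ m : ZMod 4, e m = 0 := by
    rw [← Finset.sum_filter_add_sum_filter_not Finset.univ (fun m => ε m = true) e]
    have ha : ∑ m ∈ Finset.univ.filter (fun m : ZMod 4 => ε m = true), e m = 0 :=
      Finset.sum_eq_zero fun m hm => by simp [he, (Finset.mem_filter.mp hm).2]
    have hb : ∑ m ∈ Finset.univ.filter (fun m : ZMod 4 => ¬(ε m = true)), e m = 2 := by
      rw [Finset.sum_congr rfl (fun m hm =>
          show e m = 1 by simp [he, (Finset.mem_filter.mp hm).2]),
        Finset.sum_const, h4]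
      simp
    rw [ha, hb]
    decide
  have hsum4 : e 0 + e 1 + e 2 + e 3 = 0 := by
    rw [← hsum]
    rw [show (∑ m : ZMod 4, e m) = e 0 + e 1 + e 2 + e 3 from Fin.sum_univ_four e]
  obtain ⟨F, hF⟩ := exists_F' e hsum4
  exact ⟨F, fun m => hF m⟩

end PeculiarAux


open PeculiarAlgebra in
theorem stmt2
    {M : Type*} [AddCommGroup M] [Module (ZMod 2) M] [Module.Finite (ZMod 2) M]
    -- the homological grading of 𝒜∂, as an internal ℤ-grading:
    (𝒜 : ℤ → Submodule (ZMod 2) A)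
    (h𝒜 : DirectSum.IsInternal 𝒜)
    (h𝒜mul : ∀ i j : ℤ, ∀ x ∈ 𝒜 i, ∀ y ∈ 𝒜 j, x * y ∈ 𝒜 (i + j))
    -- a fixed orientation of the four punctures (two "out", two "in"):
    (ε : ZMod 4 → Bool)
    (hε : (Finset.univ.filter fun i => ε i = true).card = 2)
    (hι : ∀ i, ιA i ∈ 𝒜 0)
    (hp : ∀ i, pA i ∈ 𝒜 (if ε i then 0 else -1))
    (hq : ∀ i, qA i ∈ 𝒜 (if ε i then 0 else -1))
    -- the joint decomposition of M by homological degree and idempotent: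
    (P' : ℤ × ZMod 4 → Submodule (ZMod 2) M)
    (hP' : DirectSum.IsInternal P')
    (δ : M →ₗ[ZMod 2] TensorProduct (ZMod 2) A M)
    -- δ is ℐ-linear and decreases the homological grading by exactly 1:
    (hδ : ∀ (n : ℤ) (i : ZMod 4), ∀ x ∈ P' (n, i),
        δ x ∈ ⨆ (k : ℤ) (j : ZMod 4),
          tensorSpan (𝒜 k ⊓ idemPart i j) (P' (n - 1 - k, j)))
    -- δ² is the curvature p⁴ + q⁴:
    (hcurv : (LinearMap.rTensor M (LinearMap.mul' (ZMod 2) A)) ∘ₗ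
        (TensorProduct.assoc (ZMod 2) A A M).symm.toLinearMap ∘ₗ
        (LinearMap.lTensor A δ) ∘ₗ δ = TensorProduct.mk (ZMod 2) A M acurv) :
    -- M splits as M₀ ⊕ M₁ with vanishing diagonal components of δ:
    ∃ M₀ M₁ : Submodule (ZMod 2) M, IsCompl M₀ M₁ ∧
      (∀ x ∈ M₀, δ x ∈ tensorSpan ⊤ M₁) ∧
      (∀ x ∈ M₁, δ x ∈ tensorSpan ⊤ M₀) := by
  classical
  obtain ⟨F, hF⟩ := PeculiarAux.exists_F ε hε
  have h2 : (2 : ZMod 2) = 0 := by decide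
  -- the key degree-shift property of `δ`
  have key : ∀ b : ZMod 2, ∀ x ∈ ⨆ c ∈ {c : ℤ × ZMod 4 | (c.1 : ZMod 2) + F c.2 = b}, P' c,
      δ x ∈ tensorSpan ⊤
        (⨆ c ∈ {c : ℤ × ZMod 4 | (c.1 : ZMod 2) + F c.2 = b + 1}, P' c) := by
    intro b x hx
    rw [← iSup_subtype''] at hx
    refine Submodule.iSup_induction
      (motive := fun x => δ x ∈ tensorSpan ⊤
        (⨆ c ∈ {c : ℤ × ZMod 4 | (c.1 : ZMod 2) + F c.2 = b + 1}, P' c))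
      _ hx ?_ ?_ ?_
    · rintro ⟨⟨n, i⟩, hc⟩ x hxc
      have hc' : (n : ZMod 2) + F i = b := hc
      have hδx := hδ n i x hxc
      refine (iSup₂_le fun k j => ?_ :
        (⨆ (k : ℤ) (j : ZMod 4), tensorSpan (𝒜 k ⊓ idemPart i j) (P' (n - 1 - k, j))) ≤ _) hδx
      by_cases hparity : (k : ZMod 2) = F i + F j
      · refine PeculiarAux.tensorSpan_le_top (le_biSup _ ?_)
        show ((n - 1 - k : ℤ) : ZMod 2) + F j = b + 1
        push_cast
        linear_combination hc' - hparity + (-1 - F i) * h2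
      · have hbot : 𝒜 k ⊓ idemPart i j = ⊥ := by
          have hle : 𝒜 k ⊓ idemPart i j ≤ 𝒜 k ⊓ PeculiarAux.Npar 𝒜 F i j :=
            inf_le_inf_left _ (PeculiarAux.idemPart_le_Npar 𝒜 F hι hp hq h𝒜mul hF i j)
          have hdisj : Disjoint (𝒜 k) (PeculiarAux.Npar 𝒜 F i j) :=
            h𝒜.submodule_iSupIndep.disjoint_biSup
              (y := {k' : ℤ | (k' : ZMod 2) = F i + F j}) hparity
          exact le_bot_iff.mp (hle.trans (le_of_eq (disjoint_iff.mp hdisj)))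
        rw [hbot, PeculiarAux.tensorSpan_bot]
        exact bot_le
    · simp only [map_zero]
      exact zero_mem _
    · intro x y hx hy
      rw [map_add]
      exact add_mem hx hy
  refine ⟨⨆ c ∈ {c : ℤ × ZMod 4 | (c.1 : ZMod 2) + F c.2 = 0}, P' c,
    ⨆ c ∈ {c : ℤ × ZMod 4 | (c.1 : ZMod 2) + F c.2 = 1}, P' c, ⟨?_, ?_⟩, ?_, ?_⟩
  · exact PeculiarAux.disjoint_biSup_biSup hP'.submodule_iSupIndep
      (fun c hc0 hc1 => by
        have : (0 : ZMod 2) = 1 := by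
          rw [← hc0, hc1]  -- hc0 : par = 0, hc1 : par = 1
        exact absurd this (by decide))
  · rw [codisjoint_iff, eq_top_iff, ← hP'.submodule_iSup_eq_top]
    refine iSup_le fun c => ?_
    by_cases hc : (c.1 : ZMod 2) + F c.2 = 0
    · exact le_sup_of_le_left (le_biSup _ hc)
    · have hc1 : (c.1 : ZMod 2) + F c.2 = 1 := by
        revert hc
        generalize (c.1 : ZMod 2) + F c.2 = a
        revert a
        decide
      exact le_sup_of_le_right (le_biSup _ hc1)
  · intro x hx
    have h01 : (0 : ZMod 2) + 1 = 1 := by decide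
    have := key 0 x hx
    rwa [h01] at this
  · intro x hx
    have h11 : (1 : ZMod 2) + 1 = 0 := by decide
    have := key 1 x hx
    rwa [h11] at this
end

section
/- Clean-up Lemma: Let (O, d_O) be an object in a category of complexes 𝔠𝔵*(𝒞) over a differential graded category 𝒞, and let h ∈ Mor₀((O,d_O),(O,d_O)) be a morphism such that h² = 0, h·D(h) = 0 and D(h)·h = 0, where D(h) = d_O∘h + h∘d_O + ∂(h). Then (O, d_O + D(h)) is again an object of 𝔠𝔵*(𝒞) and is chain homotopy equivalent to (O, d_O); explicitly, (1+h) in both directions gives mutually inverse chain isomorphisms. -/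
/-!
**Statement 4 (Clean-up Lemma).** Let `(O, d)` be an object in a category of complexes
`𝔠𝔵*(𝒞)` over a differential graded category `𝒞` (so `d∘d + ∂d = κ` for the fixed
central value `κ = *`), and let `h` be a degree-0 endomorphism of `(O,d)` with
`h² = 0`, `h·D(h) = 0` and `D(h)·h = 0`, where `D(h) = d∘h + h∘d + ∂h`.  Then
`(O, d + D(h))` is again an object of `𝔠𝔵*(𝒞)` and is chain homotopy equivalent to
`(O, d)`; explicitly, `1 + h` in both directions gives mutually inverse chain
isomorphisms.

We use an (ungraded, 𝔽₂-linear) model of a dg category: hom-sets are 𝔽₂-vector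
spaces, composition `comp f g` ("f followed by g") is biadditive and associative, and
the hom-differential `del` squares to zero and satisfies the Leibniz rule.
-/

/-- An (ungraded model of a) differential graded category over 𝔽₂. -/
structure DGCat where
  Obj : Type u
  Hom : Obj → Obj → Type v
  [homAdd : ∀ X Y : Obj, AddCommGroup (Hom X Y)]
  /-- composition, `comp f g` = "first f, then g" -/
  comp : ∀ {X Y Z : Obj}, Hom X Y → Hom Y Z → Hom X Z
  id : ∀ X : Obj, Hom X X
  /-- the differential `∂` on morphism spaces -/
  del : ∀ {X Y : Obj}, Hom X Y → Hom X Y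
  add_comp : ∀ {X Y Z : Obj} (f f' : Hom X Y) (g : Hom Y Z),
      comp (f + f') g = comp f g + comp f' g
  comp_add : ∀ {X Y Z : Obj} (f : Hom X Y) (g g' : Hom Y Z),
      comp f (g + g') = comp f g + comp f g'
  comp_assoc : ∀ {W X Y Z : Obj} (f : Hom W X) (g : Hom X Y) (h : Hom Y Z),
      comp (comp f g) h = comp f (comp g h)
  id_comp : ∀ {X Y : Obj} (f : Hom X Y), comp (id X) f = f
  comp_id : ∀ {X Y : Obj} (f : Hom X Y), comp f (id Y) = f
  del_add : ∀ {X Y : Obj} (f f' : Hom X Y), del (f + f') = del f + del f'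
  del_del : ∀ {X Y : Obj} (f : Hom X Y), del (del f) = 0
  /-- the Leibniz rule (over 𝔽₂, so no signs) -/
  leibniz : ∀ {X Y Z : Obj} (f : Hom X Y) (g : Hom Y Z),
      del (comp f g) = comp (del f) g + comp f (del g)
  /-- 𝔽₂-linearity -/
  char2 : ∀ {X Y : Obj} (f : Hom X Y), f + f = 0

attribute [instance] DGCat.homAdd

namespace Stmt4

variable (𝒞 : DGCat)

/-- the differential `D(f) = d_Y ∘ f + f ∘ d_X + ∂f` on morphisms
`f : (X, dX) → (Y, dY)` of (pre)complexes -/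
def DD {X Y : 𝒞.Obj} (dX : 𝒞.Hom X X) (dY : 𝒞.Hom Y Y) (f : 𝒞.Hom X Y) : 𝒞.Hom X Y :=
  𝒞.comp f dY + 𝒞.comp dX f + 𝒞.del f

end Stmt4


theorem ringAux {R : Type*} [Ring R]
    (del : R → R)
    (del_add : ∀ f g : R, del (f+g) = del f + del g)
    (del_del : ∀ f : R, del (del f) = 0)
    (leibniz : ∀ f g : R, del (f*g) = del f * g + f * del g)
    (char2 : ∀ x : R, x + x = 0)
    (d κ h : R)
    (hκh : h * κ = κ * h)
    (hobj : d*d + del d = κ)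
    (hsq : h*h = 0)
    (hhD : (h*d + d*h + del h) * h = 0)
    (hDh : h * (h*d + d*h + del h) = 0) :
    ((d + (h*d + d*h + del h)) * (d + (h*d + d*h + del h)) + del (d + (h*d + d*h + del h)) = κ) ∧
    ((1+h) * (d + (h*d + d*h + del h)) + d * (1+h) + del (1+h) = 0) ∧
    ((1+h) * d + (d + (h*d + d*h + del h)) * (1+h) + del (1+h) = 0) ∧
    ((1+h) * (1+h) = (1:R)) := by
  have h2 : ∀ x : R, (2:ℤ) • x = 0 := fun x => by rw [two_zsmul]; exact char2 x
  have del_zero : del 0 = 0 := by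
    have := del_add 0 0; simpa using this
  have del_one : del 1 = 0 := by
    have h1 : del 1 = del 1 + del 1 := by
      have := leibniz 1 1; simpa using this
    exact h1.trans (char2 _)
  set e := h*d + d*h + del h with he_def
  have hDe : e * d + d * e + del e = 0 := by
    have step : e * d + d * e + del e = h*(d*d+del d) + (d*d+del d)*h := by
      simp only [he_def, del_add, leibniz, del_del, mul_add, add_mul, mul_assoc, add_zero, zero_add]
      abel_nf
      simp [h2]
    rw [step, hobj, hκh, char2]
  have deriv : ∀ f g : R, (f*g)*d + d*(f*g) + del (f*g)
      = (f*d+d*f+del f)*g + f*(g*d+d*g+del g) := by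
    intro f g
    simp only [leibniz, mul_add, add_mul, mul_assoc]
    abel_nf
    simp [h2]
  have hee : e * e = 0 := by
    have h0 := deriv h e
    rw [hDh, hDe, mul_zero, add_zero, zero_mul, zero_add, del_zero, ← he_def] at h0
    simpa using h0.symm
  refine ⟨?_, ?_, ?_, ?_⟩
  · calc (d + e) * (d + e) + del (d + e)
        = (d*d + del d) + ((e*d + d*e + del e) + e*e) := by
          simp only [mul_add, add_mul, del_add]; abel
      _ = κ := by rw [hDe, hee, hobj]; simp
  · calc (1+h) * (d + e) + d * (1+h) + del (1+h)
        = h*e + ((d + d) + (e + e)) := by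
          simp only [he_def, mul_add, add_mul, one_mul, mul_one, del_add, del_one]; abel
      _ = 0 := by rw [hDh, char2, char2]; simp
  · calc (1+h) * d + (d + e) * (1+h) + del (1+h)
        = e*h + ((d + d) + (e + e)) := by
          simp only [he_def, mul_add, add_mul, one_mul, mul_one, del_add, del_one]; abel
      _ = 0 := by rw [hhD, char2, char2]; simp
  · calc (1+h)*(1+h) = 1 + ((h + h) + h*h) := by
          simp only [mul_add, add_mul, one_mul, mul_one]; abel
      _ = 1 := by rw [char2, hsq]; simp

theorem DGCat.zero_comp' (𝒞 : DGCat) {X Y Z : 𝒞.Obj} (g : 𝒞.Hom Y Z) :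
    𝒞.comp (0 : 𝒞.Hom X Y) g = 0 := by
  have h := 𝒞.add_comp (0 : 𝒞.Hom X Y) 0 g
  rw [add_zero] at h
  exact (add_left_cancel ((add_zero _).trans h)).symm

theorem DGCat.comp_zero' (𝒞 : DGCat) {X Y Z : 𝒞.Obj} (f : 𝒞.Hom X Y) :
    𝒞.comp f (0 : 𝒞.Hom Y Z) = 0 := by
  have h := 𝒞.comp_add f (0 : 𝒞.Hom Y Z) 0
  rw [add_zero] at h
  exact (add_left_cancel ((add_zero _).trans h)).symm

def DGCat.endRing (𝒞 : DGCat) (O : 𝒞.Obj) : Ring (𝒞.Hom O O) :=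
  { (inferInstance : AddCommGroup (𝒞.Hom O O)) with
    mul := 𝒞.comp
    one := 𝒞.id O
    left_distrib := fun a b c => 𝒞.comp_add a b c
    right_distrib := fun a b c => 𝒞.add_comp a b c
    zero_mul := fun a => 𝒞.zero_comp' a
    mul_zero := fun a => 𝒞.comp_zero' a
    mul_assoc := fun a b c => 𝒞.comp_assoc a b c
    one_mul := fun a => 𝒞.id_comp a
    mul_one := fun a => 𝒞.comp_id a }

open Stmt4 in
theorem stmt4 (𝒞 : DGCat) (O : 𝒞.Obj) (d κ h : 𝒞.Hom O O)
    -- `κ` is the fixed central value `*` of the category of complexes `𝔠𝔵*(𝒞)`: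
    (hκd : 𝒞.comp d κ = 𝒞.comp κ d) (hκh : 𝒞.comp h κ = 𝒞.comp κ h)
    -- `(O, d)` is an object of `𝔠𝔵*(𝒞)`:
    (hobj : 𝒞.comp d d + 𝒞.del d = κ)
    -- the hypotheses on `h`:
    (hsq : 𝒞.comp h h = 0)
    (hhD : 𝒞.comp (DD 𝒞 d d h) h = 0)   -- h ∘ D(h) = 0
    (hDh : 𝒞.comp h (DD 𝒞 d d h) = 0)   -- D(h) ∘ h = 0
    -- the new differential `d' = d + D(h)`:
    (d' : 𝒞.Hom O O) (hd' : d' = d + DD 𝒞 d d h) :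
    -- `(O, d')` is again an object of `𝔠𝔵*(𝒞)` …
    (𝒞.comp d' d' + 𝒞.del d' = κ) ∧
    -- … and `1 + h : (O,d) → (O,d')` and `1 + h : (O,d') → (O,d)` are cycles …
    (DD 𝒞 d d' (𝒞.id O + h) = 0) ∧
    (DD 𝒞 d' d (𝒞.id O + h) = 0) ∧
    -- … which are mutually inverse (chain isomorphisms):
    (𝒞.comp (𝒞.id O + h) (𝒞.id O + h) = 𝒞.id O) := by
  subst hd'
  letI : Ring (𝒞.Hom O O) := 𝒞.endRing O
  exact ringAux (R := 𝒞.Hom O O) 𝒞.del (fun f g => 𝒞.del_add f g) (fun f => 𝒞.del_del f)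
    (fun f g => 𝒞.leibniz f g) (fun x => 𝒞.char2 x) d κ h hκh hobj hsq hhD hDh
end

section
/- The one-colour skein relation for the tangle Alexander invariant: if T₊, T₋ and T₀ denote tangle diagrams identical except in a disc where they contain a positive crossing, a negative crossing and the oriented smoothing respectively, and both strands of the crossing carry the same colour t, then for every site s, ∇_{T₊}^s(t,t,…) − ∇_{T₋}^s(t,t,…) = (t − t⁻¹)·∇_{T₀}^s(t,t,…). -/
/-!
**Statement 7 (one-colour skein relation).** If `T₊`, `T₋` and `T₀` denote tangle
diagrams identical except in a disc where they contain a positive crossing, a negative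
crossing and the oriented smoothing respectively, and both strands of the crossing
carry the same colour `t`, then for every site `s`,
`∇_{T₊}^s(t,t,…) − ∇_{T₋}^s(t,t,…) = (t − t⁻¹)·∇_{T₀}^s(t,t,…)`.

Tangle diagrams are modelled combinatorially: a diagram has a finite set of crossings
`X`, a set of regions `R`, the four quadrant regions of each crossing (in the order
N, W, S, E, where N is the quadrant between the two outgoing strands), a sign for each
crossing, and an openness predicate on regions.  The invariant `∇^s` (with all colours
set equal to `t`, so with values in `ℤ[t^{±1}]`) is the Kauffman state sum of the paper
with the Alexander code specialised at `h = −1`: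
positive crossing `(N,W,S,E) ↦ (t, 1, −t⁻¹, 1)`, negative `↦ (t⁻¹, 1, −t, 1)`.

The three diagrams share the outside data `(X₀, quad₀, pos₀)`; `T₊`/`T₋` have the
extra crossing with quadrants `N, W, S, E` (pairwise distinct regions, with `N` and
`S` closed), and the oriented smoothing `T₀` has regions `R₀ = R/(N ∼ S)`, realised
by the identification map `π`.  Sites of `T₊`, `T₋`, `T₀` correspond via `π`.
-/

namespace Stmt7

/-- `ℤ[t^{±1}]` -/
abbrev L := AddMonoidAlgebra ℤ ℤ

/-- the monomial `t^k` -/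
noncomputable def T (k : ℤ) : L := AddMonoidAlgebra.single k 1

/-- a combinatorial model of a tangle diagram (with all strands of one colour):
the quadrants at a crossing are numbered `0 = N` (between the two outgoing strands),
`1 = W`, `2 = S`, `3 = E` (anticlockwise). -/
structure Diagram where
  X : Type
  R : Type
  [finX : Fintype X]
  [deqX : DecidableEq X]
  quad : X → Fin 4 → R
  pos : X → Bool
  opn : R → Prop

attribute [instance] Diagram.finX Diagram.deqX

/-- the Alexander code of a one-colour crossing, with `h = −1` substituted -/
noncomputable def label (b : Bool) : Fin 4 → L :=
  if b then ![T 1, 1, -T (-1), 1] else ![T (-1), 1, -T 1, 1]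

/-- a generalised Kauffman state: each closed region is occupied by exactly one
marker, each open region by at most one -/
def IsState (D : Diagram) (mk : D.X → Fin 4) : Prop :=
  (∀ r : D.R, ¬ D.opn r → ∃! x : D.X, D.quad x (mk x) = r) ∧
  (∀ r : D.R, D.opn r → ∀ x y : D.X, D.quad x (mk x) = r → D.quad y (mk y) = r → x = y)

/-- the site of a state: the set of occupied open regions -/
def siteOf (D : Diagram) (mk : D.X → Fin 4) : Set D.R :=
  {r | D.opn r ∧ ∃ x : D.X, D.quad x (mk x) = r}

/-- the Kauffman state sum `∇_D^s` -/
noncomputable def nabla (D : Diagram) (s : Set D.R) : L :=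
  ∑ mk : D.X → Fin 4,
    @ite _ (IsState D mk ∧ siteOf D mk = s) (Classical.propDecidable _)
      (∏ x : D.X, label (D.pos x) (mk x)) 0

/-- the diagram `T₊` (for `b = true`) or `T₋` (for `b = false`): the outside diagram
`(X₀, quad₀, pos₀)` together with one extra crossing with quadrants `N, W, S, E` -/
noncomputable def crossDiag (X₀ Reg : Type) [Fintype X₀] [DecidableEq X₀]
    (quad₀ : X₀ → Fin 4 → Reg) (pos₀ : X₀ → Bool) (opn : Reg → Prop)
    (N W S E : Reg) (b : Bool) : Diagram where
  X := Option X₀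
  R := Reg
  quad := fun o => o.elim ![N, W, S, E] quad₀
  pos := fun o => o.elim b pos₀
  opn := opn

/-- the diagram `T₀`: the oriented smoothing, whose regions are those of `T±` with
`N` and `S` identified along `π` -/
noncomputable def smoothDiag (X₀ Reg Reg₀ : Type) [Fintype X₀] [DecidableEq X₀]
    (π : Reg → Reg₀) (quad₀ : X₀ → Fin 4 → Reg) (pos₀ : X₀ → Bool)
    (opn : Reg → Prop) : Diagram where
  X := X₀
  R := Reg₀
  quad := fun x i => π (quad₀ x i)
  pos := pos₀
  opn := fun r₀ => ∃ r, π r = r₀ ∧ opn r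

end Stmt7
namespace Stmt7
section Aux
variable {X₀ Reg Reg₀ : Type} [Fintype X₀] [DecidableEq X₀]
  (quad₀ : X₀ → Fin 4 → Reg) (pos₀ : X₀ → Bool) (opn : Reg → Prop)
  (N W S E : Reg) (π : Reg → Reg₀)

theorem isState_ext_iff (b : Bool)
    (hπsurj : Function.Surjective π)
    (C C' : Reg) (hCC' : C ≠ C') (hCc : ¬ opn C) (hC'c : ¬ opn C')
    (hπC : π C = π C')
    (hinj : ∀ r r' : Reg, π r = π r' → r = r' ∨ (r = C ∧ r' = C') ∨ (r = C' ∧ r' = C))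
    (i : Fin 4) (hi : (![N, W, S, E] : Fin 4 → Reg) i = C)
    (m : X₀ → Fin 4) :
    IsState (crossDiag X₀ Reg quad₀ pos₀ opn N W S E b) (fun o => o.elim i m) ↔
      (IsState (smoothDiag X₀ Reg Reg₀ π quad₀ pos₀ opn) m ∧ ∀ x, quad₀ x (m x) ≠ C) := by
  constructor
  · rintro ⟨h1, h2⟩
    have hA : ∀ x, quad₀ x (m x) ≠ C := by
      intro x hx
      obtain ⟨o₀, ho₀, huniq⟩ := h1 C hCc
      have e1 : (some x : Option X₀) = o₀ := huniq (some x) hx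
      have e2 : (none : Option X₀) = o₀ := huniq none hi
      exact absurd (e1.trans e2.symm) (Option.some_ne_none x)
    refine ⟨⟨?_, ?_⟩, hA⟩
    · intro r₀ hr₀
      obtain ⟨r, hr⟩ := hπsurj r₀
      by_cases hrc : π r = π C
      · obtain ⟨o₀, ho₀, huniq⟩ := h1 C' hC'c
        match o₀, ho₀, huniq with
        | none, ho₀, _ =>
          exact absurd (hi.symm.trans ho₀) hCC'
        | some x₁, ho₀, huniq =>
          have ho₀' : quad₀ x₁ (m x₁) = C' := ho₀
          refine ⟨x₁, ?_, ?_⟩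
          · show π (quad₀ x₁ (m x₁)) = r₀
            rw [ho₀', ← hπC, ← hrc, hr]
          · intro y hy
            have hy2 : π (quad₀ y (m y)) = r₀ := hy
            have hy' : π (quad₀ y (m y)) = π C := by rw [hy2, ← hr, hrc]
            rcases hinj _ _ hy' with h | ⟨h, _⟩ | ⟨h, _⟩
            · exact absurd h (hA y)
            · exact absurd h (hA y)
            · exact Option.some.inj (huniq (some y) h)
      · have hrclosed : ¬ opn r := fun h => hr₀ ⟨r, hr, h⟩
        obtain ⟨o₀, ho₀, huniq⟩ := h1 r hrclosed
        match o₀, ho₀, huniq with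
        | none, ho₀, _ =>
          have : C = r := hi.symm.trans ho₀
          exact absurd (congrArg π this.symm) hrc
        | some x₁, ho₀, huniq =>
          have ho₀' : quad₀ x₁ (m x₁) = r := ho₀
          refine ⟨x₁, ?_, ?_⟩
          · show π (quad₀ x₁ (m x₁)) = r₀
            rw [ho₀', hr]
          · intro y hy
            have hy2 : π (quad₀ y (m y)) = r₀ := hy
            have hy' : π (quad₀ y (m y)) = π r := by rw [hy2, hr]
            rcases hinj _ _ hy' with h | ⟨_, h⟩ | ⟨_, h⟩
            · exact Option.some.inj (huniq (some y) h)
            · exact absurd (show π r = π C by rw [h, ← hπC]) hrc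
            · exact absurd (congrArg π h) hrc
    · intro r₀ hr₀ x y hx hy
      obtain ⟨r, hrπ, hropen⟩ := hr₀
      have hx2 : π (quad₀ x (m x)) = r₀ := hx
      have hy2 : π (quad₀ y (m y)) = r₀ := hy
      have hqx : quad₀ x (m x) = r := by
        rcases hinj _ _ (hx2.trans hrπ.symm) with h | ⟨_, h⟩ | ⟨_, h⟩
        · exact h
        · exact absurd (h ▸ hropen) hC'c
        · exact absurd (h ▸ hropen) hCc
      have hqy : quad₀ y (m y) = r := by
        rcases hinj _ _ (hy2.trans hrπ.symm) with h | ⟨_, h⟩ | ⟨_, h⟩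
        · exact h
        · exact absurd (h ▸ hropen) hC'c
        · exact absurd (h ▸ hropen) hCc
      exact Option.some.inj (h2 r hropen (some x) (some y) hqx hqy)
  · rintro ⟨⟨g1, g2⟩, hA⟩
    have opn0_iff : ∀ r : Reg, (∃ r', π r' = π r ∧ opn r') ↔ opn r := by
      intro r
      constructor
      · rintro ⟨r', hr', ho⟩
        rcases hinj r' r hr' with h | ⟨h, h'⟩ | ⟨h, h'⟩
        · rwa [h] at ho
        · exact absurd (h ▸ ho) hCc
        · exact absurd (h ▸ ho) hC'c
      · exact fun h => ⟨r, rfl, h⟩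
    constructor
    · intro r hrclosed
      have hrclosed' : ¬ opn r := hrclosed
      by_cases hrC : r = C
      · rw [hrC]
        refine ⟨none, hi, ?_⟩
        rintro (_ | x) ho
        · rfl
        · exact absurd ho (hA x)
      · by_cases hrC' : r = C'
        · rw [hrC']
          obtain ⟨x₁, hx₁, huniq⟩ :=
            g1 (π C) (fun hE => hCc ((opn0_iff C).mp hE))
          have hx₁2 : π (quad₀ x₁ (m x₁)) = π C := hx₁
          have hq : quad₀ x₁ (m x₁) = C' := by
            rcases hinj _ _ hx₁2 with h | ⟨h, _⟩ | ⟨h, _⟩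
            · exact absurd h (hA x₁)
            · exact absurd h (hA x₁)
            · exact h
          refine ⟨some x₁, hq, ?_⟩
          rintro (_ | y) ho
          · exact absurd (hi.symm.trans ho) hCC'
          · have ho' : quad₀ y (m y) = C' := ho
            have : π (quad₀ y (m y)) = π C := by rw [ho', hπC]
            exact congrArg some (huniq y this)
        · obtain ⟨x₁, hx₁, huniq⟩ :=
            g1 (π r) (fun hE => hrclosed' ((opn0_iff r).mp hE))
          have hx₁2 : π (quad₀ x₁ (m x₁)) = π r := hx₁
          have hq : quad₀ x₁ (m x₁) = r := by
            rcases hinj _ _ hx₁2 with h | ⟨_, h⟩ | ⟨_, h⟩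
            · exact h
            · exact absurd h hrC'
            · exact absurd h hrC
          refine ⟨some x₁, hq, ?_⟩
          rintro (_ | y) ho
          · exact absurd (hi.symm.trans ho).symm hrC
          · have ho' : quad₀ y (m y) = r := ho
            exact congrArg some (huniq y (congrArg π ho'))
    · intro r hropen o o' ho ho'
      have hropen' : opn r := hropen
      match o, ho with
      | none, ho => exact absurd ((hi.symm.trans ho) ▸ hropen') hCc
      | some x, ho =>
        match o', ho' with
        | none, ho' => exact absurd ((hi.symm.trans ho') ▸ hropen') hCc
        | some y, ho' =>
          have hx : quad₀ x (m x) = r := ho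
          have hy : quad₀ y (m y) = r := ho'
          exact congrArg some
            (g2 (π r) ⟨r, rfl, hropen'⟩ x y (congrArg π hx) (congrArg π hy))
end Aux
end Stmt7
namespace Stmt7
section Aux2
variable {X₀ Reg Reg₀ : Type} [Fintype X₀] [DecidableEq X₀]
  (quad₀ : X₀ → Fin 4 → Reg) (pos₀ : X₀ → Bool) (opn : Reg → Prop)
  (N W S E : Reg) (π : Reg → Reg₀)

theorem siteOf_ext_iff (b : Bool)
    (C C' : Reg) (hCc : ¬ opn C) (hC'c : ¬ opn C')
    (hinj : ∀ r r' : Reg, π r = π r' → r = r' ∨ (r = C ∧ r' = C') ∨ (r = C' ∧ r' = C))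
    (i : Fin 4) (hi : (![N, W, S, E] : Fin 4 → Reg) i = C)
    (m : X₀ → Fin 4) (s : Set Reg) (hs : ∀ r ∈ s, opn r) :
    siteOf (crossDiag X₀ Reg quad₀ pos₀ opn N W S E b) (fun o => o.elim i m) = s ↔
      siteOf (smoothDiag X₀ Reg Reg₀ π quad₀ pos₀ opn) m = π '' s := by
  have himg : siteOf (smoothDiag X₀ Reg Reg₀ π quad₀ pos₀ opn) m =
      π '' (siteOf (crossDiag X₀ Reg quad₀ pos₀ opn N W S E b) (fun o => o.elim i m)) := by
    ext r₀
    constructor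
    · rintro ⟨⟨r, hrπ, hro⟩, x, hx⟩
      have hx2 : π (quad₀ x (m x)) = r₀ := hx
      have hq : quad₀ x (m x) = r := by
        rcases hinj _ _ (hx2.trans hrπ.symm) with h | ⟨_, h⟩ | ⟨_, h⟩
        · exact h
        · exact absurd (h ▸ hro) hC'c
        · exact absurd (h ▸ hro) hCc
      exact ⟨r, ⟨hro, some x, hq⟩, hrπ⟩
    · rintro ⟨r, ⟨hro, o, ho⟩, hrπ⟩
      match o, ho with
      | none, ho => exact absurd ((hi.symm.trans ho) ▸ (hro : opn r)) hCc
      | some x, ho =>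
        refine ⟨⟨r, hrπ, hro⟩, x, ?_⟩
        show π (quad₀ x (m x)) = r₀
        rw [show quad₀ x (m x) = r from ho, hrπ]
  constructor
  · intro h; rw [himg, h]
  · intro h
    have himg2 : π '' (siteOf (crossDiag X₀ Reg quad₀ pos₀ opn N W S E b)
        (fun o => o.elim i m)) = π '' s := by rw [← himg, h]
    ext r
    constructor
    · intro hr
      have hropen : opn r := hr.1
      obtain ⟨r', hr's, hr'π⟩ := himg2 ▸ Set.mem_image_of_mem π hr
      rcases hinj r' r hr'π with h' | ⟨_, h'⟩ | ⟨_, h'⟩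
      · rwa [← h']
      · exact absurd (h' ▸ hropen) hC'c
      · exact absurd (h' ▸ hropen) hCc
    · intro hrs
      have hropen := hs r hrs
      obtain ⟨r', hr', hr'π⟩ := himg2.symm ▸ Set.mem_image_of_mem π hrs
      rcases hinj r' r hr'π with h' | ⟨_, h'⟩ | ⟨_, h'⟩
      · exact h' ▸ hr'
      · exact absurd (h' ▸ hropen) hC'c
      · exact absurd (h' ▸ hropen) hCc
end Aux2
end Stmt7
namespace Stmt7

theorem ite_congr2 {c c' : Prop} (h : c ↔ c') {a a' z : L} (ha : a = a') :
    @ite L c (Classical.propDecidable c) a z = @ite L c' (Classical.propDecidable c') a' z := by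
  by_cases hc : c
  · rw [if_pos hc, if_pos (h.mp hc), ha]
  · rw [if_neg hc, if_neg (fun hc' => hc (h.mpr hc'))]

def extEquiv (X₀ : Type) : (Fin 4 × (X₀ → Fin 4)) ≃ (Option X₀ → Fin 4) where
  toFun p := fun o => o.elim p.1 p.2
  invFun mk := (mk none, fun x => mk (some x))
  left_inv p := rfl
  right_inv mk := funext fun o => by cases o <;> rfl

theorem labT0 : label true 0 = T 1 := by simp [label]
theorem labT1 : label true 1 = 1 := by simp [label]
theorem labT2 : label true 2 = -T (-1) := by simp [label]
theorem labT3 : label true 3 = 1 := by simp [label]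
theorem labF0 : label false 0 = T (-1) := by simp [label]
theorem labF1 : label false 1 = 1 := by simp [label]
theorem labF2 : label false 2 = -T 1 := by simp [label]
theorem labF3 : label false 3 = 1 := by simp [label]

theorem sum_skein {X₀ : Type} [Fintype X₀] [DecidableEq X₀]
    (P : (Option X₀ → Fin 4) → Prop) (Q A0 A2 : (X₀ → Fin 4) → Prop)
    (h0 : ∀ m, P (fun o => o.elim 0 m) ↔ (Q m ∧ A0 m))
    (h2 : ∀ m, P (fun o => o.elim 2 m) ↔ (Q m ∧ A2 m))
    (hexcl : ∀ m, Q m → (A0 m ↔ ¬ A2 m))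
    (g : (X₀ → Fin 4) → L) :
    ∑ mk : Option X₀ → Fin 4,
        (@ite L (P mk) (Classical.propDecidable _)
            (label true (mk none) * g (fun x => mk (some x))) 0
          - @ite L (P mk) (Classical.propDecidable _)
            (label false (mk none) * g (fun x => mk (some x))) 0)
      = ∑ m : X₀ → Fin 4, (T 1 - T (-1)) * @ite L (Q m) (Classical.propDecidable _) (g m) 0 := by
  have h4 : ∀ j : Fin 4, j = 0 ∨ j = 1 ∨ j = 2 ∨ j = 3 := by decide
  have step1 : ∀ mk : Option X₀ → Fin 4,
      (@ite L (P mk) (Classical.propDecidable _)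
          (label true (mk none) * g (fun x => mk (some x))) 0
        - @ite L (P mk) (Classical.propDecidable _)
          (label false (mk none) * g (fun x => mk (some x))) 0)
      = (@ite L (mk none = 0 ∨ mk none = 2) (Classical.propDecidable _) (T 1 - T (-1)) 0)
          * @ite L (P mk) (Classical.propDecidable _) (g (fun x => mk (some x))) 0 := by
    intro mk
    by_cases hP : P mk
    · rw [if_pos hP, if_pos hP, if_pos hP, ← sub_mul]
      congr 1
      rcases h4 (mk none) with h | h | h | h <;> rw [h]
      · rw [labT0, labF0, if_pos (Or.inl rfl)]
      · rw [labT1, labF1, if_neg (by decide), sub_self]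
      · rw [labT2, labF2, if_pos (Or.inr rfl)]
        ring
      · rw [labT3, labF3, if_neg (by decide), sub_self]
    · rw [if_neg hP, if_neg hP, if_neg hP, mul_zero, sub_zero]
  rw [Finset.sum_congr rfl (fun mk _ => step1 mk)]
  have hre := Fintype.sum_equiv (extEquiv X₀)
      (fun p : Fin 4 × (X₀ → Fin 4) =>
        (@ite L ((p.1 : Fin 4) = 0 ∨ p.1 = 2) (Classical.propDecidable _) (T 1 - T (-1)) 0)
          * @ite L (P (fun o => o.elim p.1 p.2)) (Classical.propDecidable _) (g p.2) 0)
      (fun mk =>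
        (@ite L (mk none = 0 ∨ mk none = 2) (Classical.propDecidable _) (T 1 - T (-1)) 0)
          * @ite L (P mk) (Classical.propDecidable _) (g (fun x => mk (some x))) 0)
      (fun p => rfl)
  rw [← hre, Fintype.sum_prod_type]
  rw [Fin.sum_univ_four]
  have redex : ∀ i : Fin 4,
      (∑ y : X₀ → Fin 4,
        (@ite L ((i, y).1 = 0 ∨ (i, y).1 = 2) (Classical.propDecidable _) (T 1 - T (-1)) 0)
          * @ite L (P fun o => o.elim (i, y).1 (i, y).2) (Classical.propDecidable _)
              (g (i, y).2) 0)
      = ∑ y : X₀ → Fin 4,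
        (@ite L (i = 0 ∨ i = 2) (Classical.propDecidable _) (T 1 - T (-1)) 0)
          * @ite L (P fun o => o.elim i y) (Classical.propDecidable _) (g y) 0 :=
    fun i => rfl
  rw [redex 0, redex 1, redex 2, redex 3]
  have z : ∀ i : Fin 4, ¬ (i = 0 ∨ i = 2) →
      (∑ y : X₀ → Fin 4,
        (@ite L (i = 0 ∨ i = 2) (Classical.propDecidable _) (T 1 - T (-1)) 0)
          * @ite L (P fun o => o.elim i y) (Classical.propDecidable _) (g y) 0) = 0 :=
    fun i hi => Finset.sum_eq_zero fun y _ => by rw [if_neg hi, zero_mul]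
  have w : ∀ i : Fin 4, (i = 0 ∨ i = 2) →
      (∑ y : X₀ → Fin 4,
        (@ite L (i = 0 ∨ i = 2) (Classical.propDecidable _) (T 1 - T (-1)) 0)
          * @ite L (P fun o => o.elim i y) (Classical.propDecidable _) (g y) 0)
      = ∑ y : X₀ → Fin 4,
        (T 1 - T (-1)) * @ite L (P fun o => o.elim i y) (Classical.propDecidable _) (g y) 0 :=
    fun i hi => Finset.sum_congr rfl fun y _ => by rw [if_pos hi]
  rw [z 1 (by decide), z 3 (by decide), w 0 (by decide), w 2 (by decide), add_zero, add_zero,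
    ← Finset.sum_add_distrib]
  refine Finset.sum_congr rfl fun m _ => ?_
  rw [← mul_add]
  congr 1
  by_cases hQ : Q m
  · rw [if_pos hQ]
    by_cases hA : A0 m
    · rw [if_pos ((h0 m).mpr ⟨hQ, hA⟩),
        if_neg (fun hp => ((hexcl m hQ).mp hA) ((h2 m).mp hp).2), add_zero]
    · have hA2 : A2 m := not_not.mp (fun h => hA ((hexcl m hQ).mpr h))
      rw [if_neg (fun hp => hA ((h0 m).mp hp).2), if_pos ((h2 m).mpr ⟨hQ, hA2⟩), zero_add]
  · rw [if_neg hQ, if_neg (fun hp => hQ ((h0 m).mp hp).1),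
      if_neg (fun hp => hQ ((h2 m).mp hp).1), add_zero]

end Stmt7
open Stmt7 in
theorem stmt7
    (X₀ Reg Reg₀ : Type) [Fintype X₀] [DecidableEq X₀]
    (quad₀ : X₀ → Fin 4 → Reg) (pos₀ : X₀ → Bool) (opn : Reg → Prop)
    -- the quadrants of the distinguished crossing:
    (N W S E : Reg)
    (hNW : N ≠ W) (hNS : N ≠ S) (hNE : N ≠ E) (hWS : W ≠ S) (hWE : W ≠ E) (hSE : S ≠ E)
    (hNc : ¬ opn N) (hSc : ¬ opn S)
    -- the oriented smoothing merges exactly the regions N and S: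
    (π : Reg → Reg₀) (hπsurj : Function.Surjective π) (hπNS : π N = π S)
    (hπinj : ∀ r r' : Reg, π r = π r' →
      r = r' ∨ (r = N ∧ r' = S) ∨ (r = S ∧ r' = N))
    -- a site:
    (s : Set Reg) (hs : ∀ r ∈ s, opn r) :
    nabla (crossDiag X₀ Reg quad₀ pos₀ opn N W S E true) s
      - nabla (crossDiag X₀ Reg quad₀ pos₀ opn N W S E false) s
      = (T 1 - T (-1)) * nabla (smoothDiag X₀ Reg Reg₀ π quad₀ pos₀ opn) (π '' s) := by
  have hnab : ∀ b : Bool, nabla (crossDiag X₀ Reg quad₀ pos₀ opn N W S E b) s =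
      ∑ mk : Option X₀ → Fin 4,
        @ite L (IsState (crossDiag X₀ Reg quad₀ pos₀ opn N W S E true) mk ∧
                siteOf (crossDiag X₀ Reg quad₀ pos₀ opn N W S E true) mk = s)
          (Classical.propDecidable _)
          (label b (mk none) * ∏ x : X₀, label (pos₀ x) (mk (some x))) 0 := by
    intro b
    unfold nabla
    refine Finset.sum_congr rfl fun mk _ => ?_
    have h : (∏ x : Option X₀,
        label ((crossDiag X₀ Reg quad₀ pos₀ opn N W S E b).pos x) (mk x))
        = label b (mk none) * ∏ x : X₀, label (pos₀ x) (mk (some x)) := by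
      rw [Fintype.prod_option]; rfl
    cases b
    · exact ite_congr2 Iff.rfl h
    · exact ite_congr2 Iff.rfl h
  have hnab0 : nabla (smoothDiag X₀ Reg Reg₀ π quad₀ pos₀ opn) (π '' s) =
      ∑ m : X₀ → Fin 4,
        @ite L (IsState (smoothDiag X₀ Reg Reg₀ π quad₀ pos₀ opn) m ∧
                siteOf (smoothDiag X₀ Reg Reg₀ π quad₀ pos₀ opn) m = π '' s)
          (Classical.propDecidable _)
          (∏ x : X₀, label (pos₀ x) (m x)) 0 := by
    unfold nabla
    exact Finset.sum_congr rfl fun m _ => ite_congr2 Iff.rfl rfl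
  have hinj' : ∀ r r' : Reg, π r = π r' →
      r = r' ∨ (r = S ∧ r' = N) ∨ (r = N ∧ r' = S) := by
    intro r r' h
    rcases hπinj r r' h with h | h | h
    · exact Or.inl h
    · exact Or.inr (Or.inr h)
    · exact Or.inr (Or.inl h)
  have h0 : ∀ m : X₀ → Fin 4,
      (IsState (crossDiag X₀ Reg quad₀ pos₀ opn N W S E true) (fun o => o.elim 0 m) ∧
        siteOf (crossDiag X₀ Reg quad₀ pos₀ opn N W S E true) (fun o => o.elim 0 m) = s) ↔
      ((IsState (smoothDiag X₀ Reg Reg₀ π quad₀ pos₀ opn) m ∧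
        siteOf (smoothDiag X₀ Reg Reg₀ π quad₀ pos₀ opn) m = π '' s) ∧
        ∀ x, quad₀ x (m x) ≠ N) := by
    intro m
    rw [isState_ext_iff quad₀ pos₀ opn N W S E π true hπsurj N S hNS hNc hSc hπNS hπinj 0 rfl m,
      siteOf_ext_iff quad₀ pos₀ opn N W S E π true N S hNc hSc hπinj 0 rfl m s hs]
    tauto
  have h2 : ∀ m : X₀ → Fin 4,
      (IsState (crossDiag X₀ Reg quad₀ pos₀ opn N W S E true) (fun o => o.elim 2 m) ∧
        siteOf (crossDiag X₀ Reg quad₀ pos₀ opn N W S E true) (fun o => o.elim 2 m) = s) ↔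
      ((IsState (smoothDiag X₀ Reg Reg₀ π quad₀ pos₀ opn) m ∧
        siteOf (smoothDiag X₀ Reg Reg₀ π quad₀ pos₀ opn) m = π '' s) ∧
        ∀ x, quad₀ x (m x) ≠ S) := by
    intro m
    rw [isState_ext_iff quad₀ pos₀ opn N W S E π true hπsurj S N (fun h => hNS h.symm) hSc hNc
        hπNS.symm hinj' 2 rfl m,
      siteOf_ext_iff quad₀ pos₀ opn N W S E π true S N hSc hNc hinj' 2 rfl m s hs]
    tauto
  have hexcl : ∀ m : X₀ → Fin 4,
      (IsState (smoothDiag X₀ Reg Reg₀ π quad₀ pos₀ opn) m ∧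
        siteOf (smoothDiag X₀ Reg Reg₀ π quad₀ pos₀ opn) m = π '' s) →
      ((∀ x, quad₀ x (m x) ≠ N) ↔ ¬ (∀ x, quad₀ x (m x) ≠ S)) := by
    rintro m ⟨⟨g1, _⟩, _⟩
    have hclosed : ¬ (∃ r, π r = π N ∧ opn r) := by
      rintro ⟨r', hπr', ho⟩
      rcases hπinj r' N hπr' with h | ⟨h, _⟩ | ⟨h, _⟩
      · exact hNc (h ▸ ho)
      · exact hNc (h ▸ ho)
      · exact hSc (h ▸ ho)
    obtain ⟨x₁, hx₁, huniq⟩ := g1 (π N) hclosed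
    have hx₁2 : π (quad₀ x₁ (m x₁)) = π N := hx₁
    rcases hπinj _ _ hx₁2 with h | ⟨h, _⟩ | ⟨h, _⟩
    · -- quad₀ x₁ (m x₁) = N
      constructor
      · intro hA; exact absurd h (hA x₁)
      · intro hB
        exfalso; apply hB
        intro y hy
        have : y = x₁ := huniq y (show π (quad₀ y (m y)) = π N by rw [hy, hπNS])
        exact hNS ((h.symm.trans (this ▸ hy)).symm ▸ rfl)
    · constructor
      · intro hA; exact absurd h (hA x₁)
      · intro hB
        exfalso; apply hB
        intro y hy
        have : y = x₁ := huniq y (show π (quad₀ y (m y)) = π N by rw [hy, hπNS])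
        exact hNS (h.symm.trans (this ▸ hy))
    · -- quad₀ x₁ (m x₁) = S
      constructor
      · intro _
        intro hB
        exact absurd h (hB x₁)
      · intro _
        intro y hy
        have : y = x₁ := huniq y (congrArg π hy)
        exact hNS ((this ▸ hy).symm.trans h)
  rw [hnab true, hnab false, ← Finset.sum_sub_distrib, hnab0, Finset.mul_sum]
  exact sum_skein
    (fun mk => IsState (crossDiag X₀ Reg quad₀ pos₀ opn N W S E true) mk ∧
      siteOf (crossDiag X₀ Reg quad₀ pos₀ opn N W S E true) mk = s)
    (fun m => IsState (smoothDiag X₀ Reg Reg₀ π quad₀ pos₀ opn) m ∧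
      siteOf (smoothDiag X₀ Reg Reg₀ π quad₀ pos₀ opn) m = π '' s)
    (fun m => ∀ x, quad₀ x (m x) ≠ N)
    (fun m => ∀ x, quad₀ x (m x) ≠ S)
    h0 h2 hexcl (fun m => ∏ x : X₀, label (pos₀ x) (m x))
end
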